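/- Let N, m, s be positive integers with s | N, N ≥ 2, and suppose D is an N × m array over s symbols with every column balanced. Define A₂(D) = [(N−1)s²K₂(D) + m²s² − Nm(m+s−1)]/(2N), where K₂(D) = [N(N−1)/2]⁻¹ Σ_{i<j} δ_{ij}(D)². Then A₂(D) ≥ m(s−1)(ms − m − N + 1)/[2(N−1)] + (N−1)s²η(1−η)/(2N), where η is the fractional part of m(N−s)/[(N−1)s]; moreover equality holds if and only if the coincidence numbers δ_{ij}(D) (i < j) differ by at most one. -/

import Mathlib

lemma swap_double {N : ℕ} (A : Finset (Fin N × Fin N))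
    (hA : ∀ p ∈ A, Prod.swap p ∈ A) :
    A.card = 2 * ((A.filter (fun p => p.1 < p.2)).card)
      + (A.filter (fun p => p.1 = p.2)).card := by
  have h1 : (A.filter (fun p => p.1 < p.2)).card
      = (A.filter (fun p => p.2 < p.1)).card := by
    apply Finset.card_bij (fun p _ => Prod.swap p)
    · intro p hp
      simp only [Finset.mem_filter] at hp ⊢
      exact ⟨hA p hp.1, hp.2⟩
    · intro p hp q hq h
      exact Prod.swap_injective h
    · intro p hp
      simp only [Finset.mem_filter] at hp
      exact ⟨Prod.swap p, Finset.mem_filter.2 ⟨hA p hp.1, hp.2⟩, (Prod.swap_swap p).symm⟩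
  have h2 : A.card = (A.filter (fun p => p.1 < p.2)).card
      + (A.filter (fun p => ¬ p.1 < p.2)).card :=
    (Finset.card_filter_add_card_filter_not _).symm
  have h3 : A.filter (fun p => ¬ p.1 < p.2)
      = A.filter (fun p => p.1 = p.2) ∪ A.filter (fun p => p.2 < p.1) := by
    rw [← Finset.filter_or]
    apply Finset.filter_congr
    intro p _
    constructor
    · intro h
      rcases lt_or_eq_of_le (le_of_not_gt h) with h' | h'
      · exact Or.inr h'
      · exact Or.inl h'.symm
    · rintro (h | h) <;> omega
  have h4 : Disjoint (A.filter (fun p => p.1 = p.2)) (A.filter (fun p => p.2 < p.1)) := by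
    rw [Finset.disjoint_left]
    intro p hp hq
    simp only [Finset.mem_filter] at hp hq
    exact absurd hq.2 (by simp [hp.2])
  rw [h2, h3, Finset.card_union_of_disjoint h4, ← h1]
  ring

lemma prod_filter_card {N : ℕ} (Q : Fin N × Fin N → Prop) [DecidablePred Q] :
    (Finset.univ.filter Q).card
      = ∑ i : Fin N, (Finset.univ.filter fun j => Q (i, j)).card := by
  rw [Finset.card_filter, Fintype.sum_prod_type]
  exact Finset.sum_congr rfl (fun i _ => (Finset.card_filter _ _).symm)

lemma diag_card {N : ℕ} :
    (Finset.univ.filter (fun p : Fin N × Fin N => p.1 = p.2)).card = N := by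
  rw [prod_filter_card]
  have h : ∀ i : Fin N, (Finset.univ.filter fun j : Fin N => i = j).card = 1 := by
    intro i
    rw [Finset.filter_eq]
    simp
  simp only [h]
  simp

lemma col_count {N m s : ℕ} (D : Fin N → Fin m → Fin s)
    (hbal : ∀ (k : Fin m) (a : Fin s),
      (Finset.univ.filter (fun i => D i k = a)).card = N / s) (k : Fin m) :
    (Finset.univ.filter (fun p : Fin N × Fin N => D p.1 k = D p.2 k)).card
      = N * (N / s) := by
  rw [prod_filter_card]
  have h : ∀ i : Fin N,
      (Finset.univ.filter fun j => D i k = D j k).card = N / s := by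
    intro i
    rw [← hbal k (D i k)]
    congr 1
    apply Finset.filter_congr
    intro j _
    exact eq_comm
  simp [h, Finset.card_univ, mul_comm]

lemma pair_sum {N m s : ℕ} (D : Fin N → Fin m → Fin s)
    (hbal : ∀ (k : Fin m) (a : Fin s),
      (Finset.univ.filter (fun i => D i k = a)).card = N / s)
    (δ : Fin N → Fin N → ℕ)
    (hδ : ∀ i j, δ i j = (Finset.univ.filter (fun k => D i k = D j k)).card) :
    2 * (∑ p ∈ Finset.univ.filter (fun p : Fin N × Fin N => p.1 < p.2),
        δ p.1 p.2) + m * N = m * (N * (N / s)) := by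
  have step1 : (∑ p ∈ Finset.univ.filter (fun p : Fin N × Fin N => p.1 < p.2),
      δ p.1 p.2)
      = ∑ k : Fin m, ((Finset.univ.filter
          (fun p : Fin N × Fin N => D p.1 k = D p.2 k)).filter
            (fun p => p.1 < p.2)).card := by
    have hterm : ∀ p : Fin N × Fin N, δ p.1 p.2
        = ∑ k : Fin m, if D p.1 k = D p.2 k then 1 else 0 := by
      intro p; rw [hδ, Finset.card_filter]
    rw [Finset.sum_congr rfl (fun p _ => hterm p), Finset.sum_comm]
    apply Finset.sum_congr rfl
    intro k _
    rw [Finset.card_filter, Finset.sum_filter, Finset.sum_filter]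
    apply Finset.sum_congr rfl
    intro p _
    by_cases h1 : p.1 < p.2 <;> by_cases h2 : D p.1 k = D p.2 k <;> simp [h1, h2]
  rw [step1]
  have step2 : ∀ k : Fin m,
      2 * ((Finset.univ.filter
          (fun p : Fin N × Fin N => D p.1 k = D p.2 k)).filter
            (fun p => p.1 < p.2)).card + N = N * (N / s) := by
    intro k
    have hsym : ∀ p ∈ Finset.univ.filter
        (fun p : Fin N × Fin N => D p.1 k = D p.2 k), Prod.swap p ∈
        Finset.univ.filter (fun p : Fin N × Fin N => D p.1 k = D p.2 k) := by
      intro p hp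
      simp only [Finset.mem_filter, Finset.mem_univ, true_and] at hp ⊢
      exact hp.symm
    have hd := swap_double _ hsym
    rw [col_count D hbal k] at hd
    have hdiag : (Finset.univ.filter
        (fun p : Fin N × Fin N => D p.1 k = D p.2 k)).filter
          (fun p => p.1 = p.2)
        = Finset.univ.filter (fun p : Fin N × Fin N => p.1 = p.2) := by
      ext p
      simp only [Finset.mem_filter, Finset.mem_univ, true_and]
      constructor
      · rintro ⟨-, h⟩; exact h
      · intro h; exact ⟨by rw [h], h⟩
    rw [hdiag, diag_card] at hd
    omega
  calc 2 * (∑ k : Fin m, ((Finset.univ.filter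
          (fun p : Fin N × Fin N => D p.1 k = D p.2 k)).filter
            (fun p => p.1 < p.2)).card) + m * N
      = ∑ k : Fin m, (2 * ((Finset.univ.filter
          (fun p : Fin N × Fin N => D p.1 k = D p.2 k)).filter
            (fun p => p.1 < p.2)).card + N) := by
        rw [Finset.sum_add_distrib, Finset.mul_sum]
        simp [Finset.card_univ, mul_comm]
    _ = ∑ k : Fin m, N * (N / s) := Finset.sum_congr rfl (fun k _ => step2 k)
    _ = m * (N * (N / s)) := by simp [Finset.card_univ, mul_comm]

lemma P_card (N : ℕ) :
    2 * (Finset.univ.filter (fun p : Fin N × Fin N => p.1 < p.2)).card + N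
      = N * N := by
  have h := swap_double (Finset.univ : Finset (Fin N × Fin N))
    (fun p _ => Finset.mem_univ _)
  rw [diag_card, Finset.card_univ, Fintype.card_prod, Fintype.card_fin] at h
  omega

set_option maxHeartbeats 1000000

/-- Theorem 1: the lower bound for `A₂` of a balanced `s`-level supersaturated
design, with equality iff the pairwise coincidence numbers differ by at most
one. -/
theorem A2_lower_bound_multi_level
    {N m s : ℕ} (hN : 2 ≤ N) (hs : 0 < s) (hm : 0 < m) (hdvd : s ∣ N)
    (D : Fin N → Fin m → Fin s)
    (hbal : ∀ (k : Fin m) (a : Fin s),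
      (Finset.univ.filter (fun i => D i k = a)).card = N / s)
    (δ : Fin N → Fin N → ℕ)
    (hδ : ∀ i j, δ i j = (Finset.univ.filter (fun k => D i k = D j k)).card)
    (K₂ A₂ μ η : ℚ)
    (hK₂ : K₂ = (∑ p ∈ Finset.univ.filter (fun p : Fin N × Fin N => p.1 < p.2),
        (δ p.1 p.2 : ℚ) ^ 2) / ((N : ℚ) * ((N : ℚ) - 1) / 2))
    (hA₂ : A₂ = (((N : ℚ) - 1) * s ^ 2 * K₂ + (m : ℚ) ^ 2 * s ^ 2
        - (N : ℚ) * m * ((m : ℚ) + s - 1)) / (2 * N))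
    (hμ : μ = (m : ℚ) * ((N : ℚ) - s) / (((N : ℚ) - 1) * s))
    (hη : η = μ - ⌊μ⌋) :
    ((m : ℚ) * ((s : ℚ) - 1) * ((m : ℚ) * s - m - N + 1) / (2 * ((N : ℚ) - 1))
        + ((N : ℚ) - 1) * s ^ 2 * η * (1 - η) / (2 * N) ≤ A₂) ∧
    (A₂ = (m : ℚ) * ((s : ℚ) - 1) * ((m : ℚ) * s - m - N + 1) / (2 * ((N : ℚ) - 1))
        + ((N : ℚ) - 1) * s ^ 2 * η * (1 - η) / (2 * N) ↔
      ∀ i j i' j' : Fin N, i ≠ j → i' ≠ j' → δ i j ≤ δ i' j' + 1) := by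
  have hNQ : (2:ℚ) ≤ (N:ℚ) := by exact_mod_cast hN
  have hsQ : (0:ℚ) < (s:ℚ) := by exact_mod_cast hs
  have hNne : (N:ℚ) ≠ 0 := by linarith
  have hN1ne : (N:ℚ) - 1 ≠ 0 := by intro h; linarith [h]
  have hsne : (s:ℚ) ≠ 0 := ne_of_gt hsQ
  set P : Finset (Fin N × Fin N) :=
    Finset.univ.filter (fun p : Fin N × Fin N => p.1 < p.2) with hPdef
  set n : ℚ := (N : ℚ) * ((N : ℚ) - 1) / 2 with hndef
  clear_value n
  have hnpos : 0 < n := by rw [hndef]; nlinarith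
  have hPcard : (P.card : ℚ) = n := by
    have h := P_card N
    have h' : 2 * (P.card:ℚ) + (N:ℚ) = (N:ℚ) * N := by exact_mod_cast h
    rw [hndef]; linarith
  have hc : (s:ℚ) * ((N / s : ℕ):ℚ) = (N:ℚ) := by
    have h : s * (N / s) = N := Nat.mul_div_cancel' hdvd
    exact_mod_cast h
  have hT : (∑ p ∈ P, (δ p.1 p.2 : ℚ)) = n * μ := by
    have h := pair_sum D hbal δ hδ
    have h' : 2 * (∑ p ∈ P, (δ p.1 p.2 : ℚ)) + (m:ℚ) * N
        = (m:ℚ) * ((N:ℚ) * ((N / s : ℕ):ℚ)) := by exact_mod_cast h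
    rw [hμ, hndef]
    field_simp
    linear_combination (s:ℚ)*h' + (m:ℚ)*(N:ℚ)*hc
  set a : ℤ := ⌊μ⌋ with hadef
  clear_value a
  have hterm : ∀ p : Fin N × Fin N,
      ((δ p.1 p.2 : ℚ) - (a:ℚ)) * ((δ p.1 p.2 : ℚ) - (a:ℚ) - 1)
        = (δ p.1 p.2:ℚ)^2 - (2*(a:ℚ)+1)*(δ p.1 p.2:ℚ) + (a:ℚ)*((a:ℚ)+1) :=
    fun p => by ring
  have hE : (∑ p ∈ P, ((δ p.1 p.2 : ℚ) - (a:ℚ)) * ((δ p.1 p.2 : ℚ) - (a:ℚ) - 1))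
      = (∑ p ∈ P, (δ p.1 p.2 : ℚ)^2) - (2*(a:ℚ)+1)*(n*μ) + (a:ℚ)*((a:ℚ)+1)*n := by
    rw [Finset.sum_congr rfl (fun p _ => hterm p), Finset.sum_add_distrib,
      Finset.sum_sub_distrib, ← Finset.mul_sum, Finset.sum_const, nsmul_eq_mul,
      hPcard, hT]
    ring
  have htermnn : ∀ p ∈ P,
      0 ≤ ((δ p.1 p.2 : ℚ) - (a:ℚ)) * ((δ p.1 p.2 : ℚ) - (a:ℚ) - 1) := by
    intro p _
    obtain ⟨z, hz⟩ : ∃ z : ℤ, ((δ p.1 p.2 : ℚ) - (a:ℚ)) = (z:ℚ) :=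
      ⟨(δ p.1 p.2 : ℤ) - a, by push_cast; ring⟩
    rw [hz, show (z:ℚ) - 1 = ((z-1 : ℤ):ℚ) by push_cast; ring]
    have hzz : (0:ℤ) ≤ z * (z - 1) := by
      rcases le_or_gt z 0 with h | h
      · calc (0:ℤ) ≤ (-z) * (1 - z) := mul_nonneg (by omega) (by omega)
          _ = z * (z - 1) := by ring
      · exact mul_nonneg (by omega) (by omega)
    exact_mod_cast hzz
  have hKey : A₂ = (m : ℚ) * ((s : ℚ) - 1) * ((m : ℚ) * s - m - N + 1)
        / (2 * ((N : ℚ) - 1))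
        + ((N : ℚ) - 1) * s ^ 2 * η * (1 - η) / (2 * N)
      + (((N:ℚ)-1)*(s:ℚ)^2/(2*(N:ℚ)*n))
        * (∑ p ∈ P, ((δ p.1 p.2 : ℚ) - (a:ℚ)) * ((δ p.1 p.2 : ℚ) - (a:ℚ) - 1)) := by
    rw [hE, hA₂, hK₂, hη, hμ, hndef]
    have hane : η = μ - (a:ℚ) := hη
    field_simp
    ring
  have hEnn : 0 ≤ ∑ p ∈ P,
      ((δ p.1 p.2 : ℚ) - (a:ℚ)) * ((δ p.1 p.2 : ℚ) - (a:ℚ) - 1) :=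
    Finset.sum_nonneg htermnn
  have hcoef : 0 < ((N:ℚ)-1)*(s:ℚ)^2/(2*(N:ℚ)*n) := by
    apply div_pos
    · nlinarith
    · nlinarith
  constructor
  · rw [hKey]
    nlinarith [mul_nonneg (le_of_lt hcoef) hEnn]
  · have hiff1 : A₂ = (m : ℚ) * ((s : ℚ) - 1) * ((m : ℚ) * s - m - N + 1)
          / (2 * ((N : ℚ) - 1))
          + ((N : ℚ) - 1) * s ^ 2 * η * (1 - η) / (2 * N)
        ↔ (∑ p ∈ P, ((δ p.1 p.2 : ℚ) - (a:ℚ)) * ((δ p.1 p.2 : ℚ) - (a:ℚ) - 1)) = 0 := by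
      rw [hKey]
      constructor
      · intro h
        have h2 : (((N:ℚ)-1)*(s:ℚ)^2/(2*(N:ℚ)*n))
            * (∑ p ∈ P, ((δ p.1 p.2 : ℚ) - (a:ℚ)) * ((δ p.1 p.2 : ℚ) - (a:ℚ) - 1))
            = 0 := by linarith
        rcases mul_eq_zero.1 h2 with h3 | h3
        · exact absurd h3 (ne_of_gt hcoef)
        · exact h3
      · intro h; rw [h]; ring
    rw [hiff1, Finset.sum_eq_zero_iff_of_nonneg htermnn]
    have hδsym : ∀ i j, δ i j = δ j i := by
      intro i j
      rw [hδ, hδ]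
      congr 1
      apply Finset.filter_congr
      intro k _
      exact eq_comm
    have pair_reduce : ∀ i j : Fin N, i ≠ j → ∃ p, p ∈ P ∧ δ i j = δ p.1 p.2 := by
      intro i j hij
      rcases lt_or_gt_of_ne hij with h | h
      · exact ⟨(i,j), Finset.mem_filter.2 ⟨Finset.mem_univ _, h⟩, rfl⟩
      · exact ⟨(j,i), Finset.mem_filter.2 ⟨Finset.mem_univ _, h⟩, hδsym i j⟩
    constructor
    · intro hz i j i' j' hij hij'
      obtain ⟨p, hp, hpe⟩ := pair_reduce i j hij
      obtain ⟨q, hq, hqe⟩ := pair_reduce i' j' hij'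
      have extract : ∀ r ∈ P, (δ r.1 r.2 : ℚ) = (a:ℚ) ∨ (δ r.1 r.2 : ℚ) = (a:ℚ)+1 := by
        intro r hr
        rcases mul_eq_zero.1 (hz r hr) with h | h
        · left; linarith [sub_eq_zero.1 h]
        · right; linarith [sub_eq_zero.1 (by linarith : (δ r.1 r.2 : ℚ) - ((a:ℚ)+1) = 0)]
      have e1 := extract p hp
      have e2 := extract q hq
      have hfin : (δ i j : ℚ) ≤ (δ i' j' : ℚ) + 1 := by
        rw [hpe, hqe]
        rcases e1 with h | h <;> rcases e2 with h' | h' <;> rw [h, h'] <;> linarith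
      exact_mod_cast hfin
    · intro hC p hp
      have hPne : P.Nonempty := ⟨(⟨0, by omega⟩, ⟨1, by omega⟩),
        Finset.mem_filter.2 ⟨Finset.mem_univ _, by simp [Fin.lt_def]⟩⟩
      have hPine : (P.image fun q => δ q.1 q.2).Nonempty := hPne.image _
      set b := (P.image fun q => δ q.1 q.2).min' hPine with hbdef
      obtain ⟨p0, hp0, hp0e⟩ := Finset.mem_image.1 ((P.image fun q => δ q.1 q.2).min'_mem hPine)
      rw [← hbdef] at hp0e
      have hlb : ∀ q ∈ P, b ≤ δ q.1 q.2 := fun q hq =>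
        Finset.min'_le _ _ (Finset.mem_image_of_mem _ hq)
      have hne0 : ∀ q : Fin N × Fin N, q ∈ P → q.1 ≠ q.2 := fun q hq =>
        ne_of_lt (Finset.mem_filter.1 hq).2
      have hub : ∀ q ∈ P, δ q.1 q.2 ≤ b + 1 := by
        intro q hq
        rw [← hp0e]
        exact hC q.1 q.2 p0.1 p0.2 (hne0 q hq) (hne0 p0 hp0)
      have hsum_lb : n * (b:ℚ) ≤ n * μ := by
        rw [← hT, ← hPcard]
        calc ((P.card : ℚ)) * (b:ℚ) = ∑ q ∈ P, (b:ℚ) := by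
              rw [Finset.sum_const, nsmul_eq_mul]
          _ ≤ ∑ q ∈ P, (δ q.1 q.2 : ℚ) :=
              Finset.sum_le_sum (fun q hq => by exact_mod_cast hlb q hq)
      have hsum_ub : n * μ ≤ n * ((b:ℚ)+1) := by
        rw [← hT, ← hPcard]
        calc (∑ q ∈ P, (δ q.1 q.2 : ℚ)) ≤ ∑ q ∈ P, ((b:ℚ)+1) :=
              Finset.sum_le_sum (fun q hq => by exact_mod_cast hub q hq)
          _ = ((P.card : ℚ)) * ((b:ℚ)+1) := by rw [Finset.sum_const, nsmul_eq_mul]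
      have hbμ : (b:ℚ) ≤ μ := le_of_mul_le_mul_left (by linarith) hnpos
      have hμb1 : μ ≤ (b:ℚ)+1 := le_of_mul_le_mul_left (by linarith) hnpos
      rcases eq_or_lt_of_le hμb1 with heq | hlt
      · have hall : ∀ q ∈ P, (δ q.1 q.2 : ℚ) = (b:ℚ)+1 := by
          have hle : ∀ q ∈ P, (δ q.1 q.2 : ℚ) ≤ (b:ℚ)+1 :=
            fun q hq => by exact_mod_cast hub q hq
          have hsum : (∑ q ∈ P, (δ q.1 q.2 : ℚ)) = ∑ q ∈ P, ((b:ℚ)+1) := by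
            rw [hT, Finset.sum_const, nsmul_eq_mul, hPcard, heq]
          exact fun q hq => (Finset.sum_eq_sum_iff_of_le hle).1 hsum q hq
        have ha : (a:ℚ) = (b:ℚ)+1 := by
          have hμint : μ = (((b:ℤ)+1 : ℤ):ℚ) := by push_cast; linarith
          rw [hadef, hμint, Int.floor_intCast]
          push_cast; ring
        rw [hall p hp, ha]; ring
      · have ha : a = (b:ℤ) := by
          rw [hadef, Int.floor_eq_iff]
          constructor
          · exact_mod_cast hbμ
          · push_cast; exact hlt
        have h1 := hlb p hp
        have h2 := hub p hp
        have hor : δ p.1 p.2 = b ∨ δ p.1 p.2 = b + 1 := by omega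
        rcases hor with h | h <;> rw [h, ha] <;> push_cast <;> ring
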